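/- arXiv:2006.04659 — 2 statements merged into one kernel-verified Lean document; each statement's English description precedes it below -/
import Mathlib

section
/- At-the-money-forward leading term and the Brenner–Subrahmanyam limit: fix S_t > 0, σ > 0 and τ > 0, and for α > 0 set δ := σ²α. Then lim_{α→∞} (S_t δτ/π) e^{αδτ} K₀(αδτ) = S_t σ √τ / √(2π); that is, the leading (n₁ = 0, n₂ = 1) term of the symmetric NIG European call series at the money forward converges, in the large-steepness regime with σ² = δ/α held fixed, to the Black–Scholes at-the-money-forward approximation S_t σ√τ/√(2π). -/
open MeasureTheory

/-- Modified Bessel function of the second kind, real index `ν`, real argument `z`. -/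
noncomputable def besselKr (ν : ℝ) (z : ℝ) : ℝ :=
  (1 / 2) * (z / 2) ^ ν *
    ∫ t in Set.Ioi (0 : ℝ), Real.exp (-t - z ^ 2 / (4 * t)) * t ^ (-ν - 1)

lemma besselK0_repr (z : ℝ) (hz : 0 < z) :
    (∫ u : ℝ, Real.exp (-u ^ 2) / Real.sqrt (u ^ 2 + 2 * z)) =
      (Real.exp z / 2) * ∫ t in Set.Ioi (0:ℝ),
        Real.exp (-t - z ^ 2 / (4 * t)) * t⁻¹ := by
  set f : ℝ → ℝ := fun t => Real.sqrt t - z / 2 * (Real.sqrt t)⁻¹ with hf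
  set f' : ℝ → ℝ := fun t => (2 * t + z) / (4 * t * Real.sqrt t) with hf'
  have hderiv : ∀ t ∈ Set.Ioi (0:ℝ), HasDerivWithinAt f (f' t) (Set.Ioi 0) t := by
    intro t ht
    have ht0 : (0:ℝ) < t := ht
    have hst : (0:ℝ) < Real.sqrt t := Real.sqrt_pos.2 ht0
    have hss : Real.sqrt t ^ 2 = t := Real.sq_sqrt ht0.le
    have h1 : HasDerivAt (fun t => Real.sqrt t) (1 / (2 * Real.sqrt t)) t :=
      Real.hasDerivAt_sqrt ht0.ne'
    have h2 : HasDerivAt (fun t => z / 2 * (Real.sqrt t)⁻¹)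
        (z / 2 * (-(1 / (2 * Real.sqrt t)) / (Real.sqrt t) ^ 2)) t :=
      (h1.inv hst.ne').const_mul (z / 2)
    have h3 := h1.sub h2
    have heq : 1 / (2 * Real.sqrt t) - z / 2 * (-(1 / (2 * Real.sqrt t)) / (Real.sqrt t) ^ 2)
        = f' t := by
      simp only [hf']
      rw [show t = Real.sqrt t ^ 2 from hss.symm]
      field_simp
      rw [Real.sqrt_sq hst.le]
      ring
    rw [heq] at h3
    exact h3.hasDerivWithinAt
  have hinj : Set.InjOn f (Set.Ioi 0) := by
    intro a ha b hb hab
    have ha0 : (0:ℝ) < a := ha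
    have hb0 : (0:ℝ) < b := hb
    have hsa : (0:ℝ) < Real.sqrt a := Real.sqrt_pos.2 ha0
    have hsb : (0:ℝ) < Real.sqrt b := Real.sqrt_pos.2 hb0
    have h : Real.sqrt a - z / 2 * (Real.sqrt a)⁻¹
        = Real.sqrt b - z / 2 * (Real.sqrt b)⁻¹ := hab
    have hfac : (Real.sqrt a - Real.sqrt b) * (2 * Real.sqrt a * Real.sqrt b + z) = 0 := by
      field_simp at h
      nlinarith [h]
    have hab' : Real.sqrt a = Real.sqrt b := by
      have hpos : 0 < 2 * Real.sqrt a * Real.sqrt b + z := by positivity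
      rcases mul_eq_zero.1 hfac with h' | h'
      · linarith
      · linarith
    calc a = Real.sqrt a * Real.sqrt a := (Real.mul_self_sqrt ha0.le).symm
      _ = Real.sqrt b * Real.sqrt b := by rw [hab']
      _ = b := Real.mul_self_sqrt hb0.le
  have himage : f '' Set.Ioi 0 = Set.univ := by
    apply Set.eq_univ_of_forall
    intro u
    set s := Real.sqrt (u ^ 2 + 2 * z) with hs
    have hs2 : s ^ 2 = u ^ 2 + 2 * z := Real.sq_sqrt (by positivity)
    have hsu : |u| < s := by
      have : Real.sqrt (u ^ 2) < s := Real.sqrt_lt_sqrt (by positivity) (by linarith)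
      simpa [Real.sqrt_sq_eq_abs] using this
    have hw : 0 < (u + s) / 2 := by
      rcases abs_lt.1 hsu with ⟨h1, h2⟩; linarith
    refine ⟨((u + s) / 2) ^ 2, Set.mem_Ioi.2 (by positivity), ?_⟩
    have hsq : Real.sqrt (((u + s) / 2) ^ 2) = (u + s) / 2 := Real.sqrt_sq hw.le
    simp only [hf, hsq]
    have hus : (0:ℝ) < u + s := by linarith
    have hne2 : u + s ≠ 0 := hus.ne'
    field_simp
    linear_combination hs2
  have hcov := integral_image_eq_integral_abs_deriv_smul measurableSet_Ioi hderiv hinj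
    (fun u => Real.exp (-u ^ 2) / Real.sqrt (u ^ 2 + 2 * z))
  rw [himage, setIntegral_univ] at hcov
  rw [hcov, ← integral_const_mul]
  apply setIntegral_congr_fun measurableSet_Ioi
  intro t ht
  obtain ⟨v, hv, rfl⟩ : ∃ v : ℝ, 0 < v ∧ t = v ^ 2 :=
    ⟨Real.sqrt t, Real.sqrt_pos.2 ht, (Real.sq_sqrt (le_of_lt ht)).symm⟩
  have hsv : Real.sqrt (v ^ 2) = v := Real.sqrt_sq hv.le
  simp only [hf, hf', hsv, smul_eq_mul]
  have hfpos : 0 < (2 * v ^ 2 + z) / (4 * v ^ 2 * v) := by positivity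
  rw [abs_of_pos hfpos]
  have hsq : (v - z / 2 * v⁻¹) ^ 2 + 2 * z = (v + z / 2 * v⁻¹) ^ 2 := by
    field_simp; ring
  rw [hsq, Real.sqrt_sq (by positivity)]
  have hexp : Real.exp (-(v - z / 2 * v⁻¹) ^ 2)
      = Real.exp z * Real.exp (-v ^ 2 - z ^ 2 / (4 * v ^ 2)) := by
    rw [← Real.exp_add]
    congr 1
    field_simp
    ring
  rw [hexp]
  field_simp
  ring

lemma sqrtJ_tendsto :
    Filter.Tendsto
      (fun z : ℝ => Real.sqrt z *
        ∫ u : ℝ, Real.exp (-u ^ 2) / Real.sqrt (u ^ 2 + 2 * z))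
      Filter.atTop
      (nhds (Real.sqrt Real.pi / Real.sqrt 2)) := by
  have hs2 : (0:ℝ) < Real.sqrt 2 := Real.sqrt_pos.2 (by norm_num)
  have hEq : ∀ z : ℝ, Real.sqrt z * ∫ u : ℝ, Real.exp (-u ^ 2) / Real.sqrt (u ^ 2 + 2 * z)
      = ∫ u : ℝ, Real.exp (-u ^ 2) * (Real.sqrt z / Real.sqrt (u ^ 2 + 2 * z)) := by
    intro z
    rw [← integral_const_mul]
    congr 1; ext u; ring
  simp only [hEq]
  have hval : Real.sqrt Real.pi / Real.sqrt 2
      = ∫ u : ℝ, Real.exp (-u ^ 2) * (1 / Real.sqrt 2) := by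
    rw [integral_mul_const,
      show (fun u : ℝ => Real.exp (-u ^ 2)) = fun u : ℝ => Real.exp (-1 * u ^ 2) by
        ext u; norm_num,
      integral_gaussian]
    norm_num [div_eq_mul_inv]
  rw [hval]
  apply tendsto_integral_filter_of_dominated_convergence
    (bound := fun u : ℝ => Real.exp (-u ^ 2) * (1 / Real.sqrt 2))
  · filter_upwards [Filter.eventually_ge_atTop (1:ℝ)] with z hz
    apply Continuous.aestronglyMeasurable
    apply Continuous.mul (by continuity)
    apply Continuous.div continuous_const
    · continuity
    · intro u
      have : (0:ℝ) < u ^ 2 + 2 * z := by nlinarith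
      exact (Real.sqrt_pos.2 this).ne'
  · filter_upwards [Filter.eventually_ge_atTop (1:ℝ)] with z hz
    filter_upwards with u
    have hz0 : (0:ℝ) < z := by linarith
    have hd : (0:ℝ) < Real.sqrt (u ^ 2 + 2 * z) := Real.sqrt_pos.2 (by nlinarith)
    have hfrac : Real.sqrt z / Real.sqrt (u ^ 2 + 2 * z) ≤ 1 / Real.sqrt 2 := by
      rw [div_le_div_iff₀ hd hs2]
      have h1 : Real.sqrt z * Real.sqrt 2 = Real.sqrt (2 * z) := by
        rw [Real.sqrt_mul (by norm_num : (0:ℝ) ≤ 2)]; ring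
      rw [h1]
      calc Real.sqrt (2 * z) ≤ Real.sqrt (u ^ 2 + 2 * z) :=
            Real.sqrt_le_sqrt (by nlinarith)
        _ = 1 * Real.sqrt (u ^ 2 + 2 * z) := (one_mul _).symm
    have hnn : 0 ≤ Real.exp (-u ^ 2) * (Real.sqrt z / Real.sqrt (u ^ 2 + 2 * z)) := by
      positivity
    rw [Real.norm_eq_abs, abs_of_nonneg hnn]
    exact mul_le_mul_of_nonneg_left hfrac (Real.exp_nonneg _)
  · have : Integrable (fun u : ℝ => Real.exp (-1 * u ^ 2)) volume :=
      integrable_exp_neg_mul_sq one_pos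
    simpa using this.mul_const (1 / Real.sqrt 2)
  · filter_upwards with u
    apply Filter.Tendsto.const_mul
    have h1 : Filter.Tendsto (fun z : ℝ => z / (u ^ 2 + 2 * z)) Filter.atTop
        (nhds (1 / 2)) := by
      have h2 := ((tendsto_inv_atTop_zero).const_mul (u ^ 2)).add
        (tendsto_const_nhds (x := (2:ℝ)))
      simp only [mul_zero, zero_add] at h2
      have h3 := (tendsto_const_nhds (x := (1:ℝ))).div h2 (by norm_num)
      apply h3.congr'
      filter_upwards [Filter.eventually_gt_atTop (0:ℝ)] with z hz
      simp only [Pi.div_apply]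
      field_simp
    have h4 := ((Real.continuous_sqrt.tendsto (1/2 : ℝ)).comp h1)
    have h5 : Real.sqrt (1 / 2 : ℝ) = 1 / Real.sqrt 2 := by
      rw [Real.sqrt_div zero_le_one, Real.sqrt_one]
    rw [h5] at h4
    apply h4.congr'
    filter_upwards [Filter.eventually_gt_atTop (0:ℝ)] with z hz
    simp only [Function.comp]
    rw [Real.sqrt_div hz.le]

/-- The at-the-money-forward leading term of the symmetric NIG European call series,
with `δ = σ²α`, converges as `α → ∞` to the Brenner–Subrahmanyam Black–Scholes
at-the-money approximation `S σ √τ / √(2π)`. -/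
theorem atm_leading_term_brenner_subrahmanyam
    (S σ τ : ℝ) (hS : 0 < S) (hσ : 0 < σ) (hτ : 0 < τ) :
    Filter.Tendsto
      (fun α : ℝ =>
        S * (σ ^ 2 * α) * τ / Real.pi * Real.exp (α * (σ ^ 2 * α) * τ) *
          besselKr 0 (α * (σ ^ 2 * α) * τ))
      Filter.atTop
      (nhds (S * σ * Real.sqrt τ / Real.sqrt (2 * Real.pi))) := by
  have hπ : (0:ℝ) < Real.pi := Real.pi_pos
  obtain ⟨w, hw, rfl⟩ : ∃ w : ℝ, 0 < w ∧ τ = w ^ 2 :=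
    ⟨Real.sqrt τ, Real.sqrt_pos.2 hτ, (Real.sq_sqrt hτ.le).symm⟩
  simp only [Real.sqrt_sq hw.le]
  have hbessel : ∀ z : ℝ, besselKr 0 z
      = (1 / 2) * ∫ t in Set.Ioi (0:ℝ), Real.exp (-t - z ^ 2 / (4 * t)) * t⁻¹ := by
    intro z
    unfold besselKr
    norm_num
    congr 1
    ext t
    rw [Real.rpow_neg_one]
  -- the scaled variable tends to infinity
  have hz : Filter.Tendsto (fun α : ℝ => α * (σ ^ 2 * α) * (w ^ 2)) Filter.atTop Filter.atTop := by
    have h1 : Filter.Tendsto (fun α : ℝ => (σ ^ 2 * (w ^ 2)) * α ^ 2) Filter.atTop Filter.atTop :=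
      (Filter.tendsto_pow_atTop (by norm_num : 2 ≠ 0)).const_mul_atTop (by positivity)
    apply h1.congr
    intro α; ring
  have hcomp := sqrtJ_tendsto.comp hz
  have key := hcomp.const_mul (S * σ * w / Real.pi)
  have hval : (S * σ * w / Real.pi) * (Real.sqrt Real.pi / Real.sqrt 2)
      = S * σ * w / Real.sqrt (2 * Real.pi) := by
    have h2 : Real.sqrt (2 * Real.pi) = Real.sqrt 2 * Real.sqrt Real.pi :=
      Real.sqrt_mul (by norm_num) _
    have hππ : Real.sqrt Real.pi * Real.sqrt Real.pi = Real.pi :=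
      Real.mul_self_sqrt hπ.le
    have hs2 : (0:ℝ) < Real.sqrt 2 := Real.sqrt_pos.2 (by norm_num)
    have hsπ : (0:ℝ) < Real.sqrt Real.pi := Real.sqrt_pos.2 hπ
    rw [h2]
    field_simp
    linear_combination hππ
  rw [hval] at key
  apply key.congr'
  filter_upwards [Filter.eventually_gt_atTop (0:ℝ)] with α hα
  have hzpos : 0 < α * (σ ^ 2 * α) * (w ^ 2) := by positivity
  have hrepr := besselK0_repr _ hzpos
  have hsz : Real.sqrt (α * (σ ^ 2 * α) * w ^ 2) = σ * α * w := by
    rw [show α * (σ ^ 2 * α) * w ^ 2 = (σ * α * w) ^ 2 by ring,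
      Real.sqrt_sq (by positivity)]
  simp only [Function.comp]
  rw [hrepr, hsz, hbessel]
  field_simp
  ring_nf
  congr 1; ext t; ring
end

section
/- Gaussian limit of the symmetric NIG density: fix σ > 0, μ ∈ ℝ and x ∈ ℝ, and for α > 0 set δ := σ²α. Then the symmetric NIG density at t = 1 converges pointwise to the normal density: lim_{α→∞} (αδ/π) e^{αδ} K₁(α√(δ² + (x−μ)²)) / √(δ² + (x−μ)²) = (1/(σ√(2π))) e^{−(x−μ)²/(2σ²)}, i.e. NIG(α, 0, δ, μ) with σ² = δ/α held fixed degenerates into the normal distribution N(μ, σ²) as α → ∞. -/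
open MeasureTheory

/-- Symmetric NIG density at time `t`. -/
noncomputable def nigDensity (α δ μ x t : ℝ) : ℝ :=
  (α * δ * t / Real.pi) * Real.exp (α * δ * t) *
    besselKr 1 (α * Real.sqrt ((δ * t) ^ 2 + (x - μ * t) ^ 2)) /
    Real.sqrt ((δ * t) ^ 2 + (x - μ * t) ^ 2)

/-- Auxiliary integrand after the change of variables `t = α²σ²/2 + αu/2`. -/
noncomputable def nigF (σ r α u : ℝ) : ℝ :=
  σ ^ 2 / (2 * Real.pi) * Real.exp (-(u ^ 2 + r ^ 2) / (2 * (σ ^ 2 + u / α))) /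
    (σ ^ 2 + u / α) ^ 2

lemma one_add_sq_div_four_le_exp {x : ℝ} (hx : 0 ≤ x) : 1 + x ^ 2 / 4 ≤ Real.exp x := by
  have h := Real.add_one_le_exp (x / 2)
  have h0 : (0:ℝ) ≤ x / 2 + 1 := by linarith
  have h2 : (x / 2 + 1) ^ 2 ≤ Real.exp (x / 2) ^ 2 := by
    apply pow_le_pow_left₀ h0 (by linarith) 2
  have h3 : Real.exp (x / 2) ^ 2 = Real.exp x := by
    rw [← Real.exp_nat_mul]; congr 1; ring
  nlinarith [h2, h3]

lemma key_bound (σ : ℝ) (hσ : 0 < σ) {α u : ℝ} (hα1 : 1 ≤ α) (hα2 : 2 / σ ^ 2 ≤ α)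
    (hu : -(σ ^ 2 * α) < u) :
    min (σ ^ 4 / 8) (1 / 32) * (1 + u ^ 2) ≤
      (σ ^ 2 + u / α) ^ 2 * Real.exp (u ^ 2 / (2 * (σ ^ 2 + u / α))) := by
  have hα0 : (0:ℝ) < α := lt_of_lt_of_le one_pos hα1
  have h2σ : 2 ≤ σ ^ 2 * α := by
    have := (div_le_iff₀ (by positivity : (0:ℝ) < σ ^ 2)).mp hα2
    nlinarith
  set w : ℝ := σ ^ 2 + u / α with hw_def
  clear_value w
  have hw : 0 < w := by
    have : -(σ ^ 2) < u / α := by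
      rw [lt_div_iff₀ hα0]; nlinarith
    rw [hw_def]; linarith
  have hx : 0 ≤ u ^ 2 / (2 * w) := by positivity
  have he := one_add_sq_div_four_le_exp hx
  have hkey : w ^ 2 + u ^ 4 / 16 ≤ w ^ 2 * Real.exp (u ^ 2 / (2 * w)) := by
    have heq : w ^ 2 * (1 + (u ^ 2 / (2 * w)) ^ 2 / 4) = w ^ 2 + u ^ 4 / 16 := by
      field_simp; ring
    nlinarith [mul_le_mul_of_nonneg_left he (sq_nonneg w)]
  have hm1 : min (σ ^ 4 / 8) (1 / 32) ≤ σ ^ 4 / 8 := min_le_left _ _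
  have hm2 : min (σ ^ 4 / 8) (1 / 32) ≤ 1 / 32 := min_le_right _ _
  have hm0 : 0 < min (σ ^ 4 / 8) (1 / 32) := by
    apply lt_min (by positivity) (by norm_num)
  have hpos : (0:ℝ) ≤ 1 + u ^ 2 := by positivity
  rcases le_or_gt 0 u with hu0 | hu0
  · -- u ≥ 0 : w ≥ σ²
    have hwge : σ ^ 2 ≤ w := by
      have : 0 ≤ u / α := by positivity
      rw [hw_def]; linarith
    have hw2 : σ ^ 4 ≤ w ^ 2 := by nlinarith
    rcases le_or_gt (u ^ 2) 1 with h1 | h1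
    · linarith [mul_le_mul_of_nonneg_right hm1 hpos,
        mul_le_mul_of_nonneg_left h1 (by positivity : (0:ℝ) ≤ σ ^ 4 / 8),
        sq_nonneg (u ^ 2), sq_nonneg (σ ^ 2), hkey]
    · linarith [mul_le_mul_of_nonneg_right hm2 hpos,
        mul_nonneg (sq_nonneg u) (by linarith : (0:ℝ) ≤ u ^ 2 - 1), sq_nonneg w, hkey]
  · -- u < 0
    rcases le_or_gt (u ^ 2) 1 with h1 | h1
    · have hiu : -1 ≤ u := by nlinarith
      have hdiv : -(σ ^ 2 / 2) ≤ u / α := by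
        rw [neg_le, ← neg_div, div_le_iff₀ hα0]
        nlinarith
      have hwge : σ ^ 2 / 2 ≤ w := by rw [hw_def]; linarith
      have hw2 : σ ^ 4 / 4 ≤ w ^ 2 := by nlinarith
      linarith [mul_le_mul_of_nonneg_left (by linarith : 1 + u ^ 2 ≤ 2) hm0.le,
        hm1, hw2, sq_nonneg (u ^ 2), hkey]
    · linarith [mul_le_mul_of_nonneg_right hm2 hpos,
        mul_nonneg (sq_nonneg u) (by linarith : (0:ℝ) ≤ u ^ 2 - 1), sq_nonneg w, hkey]


set_option maxHeartbeats 1000000 in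
lemma nig_rewrite (σ μ x : ℝ) (hσ : 0 < σ) {α : ℝ} (hα : 0 < α) :
    nigDensity α (σ ^ 2 * α) μ x 1 =
      ∫ u in Set.Ioi (-(σ ^ 2 * α)), nigF σ (x - μ) α u := by
  have hπ := Real.pi_pos
  unfold nigDensity besselKr
  rw [Real.rpow_one]
  simp only [mul_one]
  set r := x - μ with hr
  clear_value r
  set s := Real.sqrt ((σ ^ 2 * α) ^ 2 + r ^ 2) with hs_def
  have hspos : 0 < s := Real.sqrt_pos.mpr (by positivity)
  have hs2 : s ^ 2 = (σ ^ 2 * α) ^ 2 + r ^ 2 := Real.sq_sqrt (by positivity)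
  clear_value s
  set φ : ℝ → ℝ := fun u => α ^ 2 * σ ^ 2 / 2 + α / 2 * u with hφ
  have himg : φ '' Set.Ioi (-(σ ^ 2 * α)) = Set.Ioi 0 := by
    ext t
    simp only [Set.mem_image, Set.mem_Ioi, hφ]
    constructor
    · rintro ⟨u, hu, rfl⟩; nlinarith
    · intro ht
      refine ⟨(t - α ^ 2 * σ ^ 2 / 2) / (α / 2), ?_, ?_⟩
      · rw [lt_div_iff₀ (by positivity : (0:ℝ) < α / 2)]; nlinarith
      · field_simp; ring
  have hderiv : ∀ u ∈ Set.Ioi (-(σ ^ 2 * α)),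
      HasDerivWithinAt φ (α / 2) (Set.Ioi (-(σ ^ 2 * α))) u := by
    intro u hu
    have := ((hasDerivWithinAt_id u (Set.Ioi (-(σ ^ 2 * α)))).const_mul
      (α / 2)).const_add (α ^ 2 * σ ^ 2 / 2)
    simpa [hφ] using this
  have hinj : Set.InjOn φ (Set.Ioi (-(σ ^ 2 * α))) := by
    intro a _ b _ hab
    simp only [hφ] at hab
    have h2 : α / 2 * a = α / 2 * b := by linarith
    exact mul_left_cancel₀ (by positivity : (0:ℝ) < α / 2).ne' h2
  have hchg := integral_image_eq_integral_abs_deriv_smul measurableSet_Ioi hderiv hinj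
      (fun t => Real.exp (-t - (α * s) ^ 2 / (4 * t)) * t ^ (-1 - 1 : ℝ))
  rw [himg] at hchg
  rw [hchg]
  have hform : ∀ I : ℝ,
      α * (σ ^ 2 * α) / Real.pi * Real.exp (α * (σ ^ 2 * α)) * (1 / 2 * (α * s / 2) * I) / s =
        σ ^ 2 * α ^ 3 / (4 * Real.pi) * Real.exp (α * (σ ^ 2 * α)) * I := by
    intro I; field_simp; ring
  rw [hform]
  rw [← MeasureTheory.integral_const_mul]
  apply MeasureTheory.setIntegral_congr_fun measurableSet_Ioi
  intro u hu
  simp only [Set.mem_Ioi] at hu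
  have hwpos : 0 < σ ^ 2 + u / α := by
    have : -(σ ^ 2) < u / α := by rw [lt_div_iff₀ hα]; nlinarith
    linarith
  have htpos : 0 < φ u := by
    simp only [hφ]
    nlinarith [mul_pos (by positivity : (0:ℝ) < α / 2) (by linarith : 0 < σ ^ 2 * α + u)]
  have hrpow : (φ u) ^ (-1 - 1 : ℝ) = ((φ u) ^ 2)⁻¹ := by
    rw [show (-1 - 1 : ℝ) = -((2:ℕ):ℝ) by norm_num, Real.rpow_neg htpos.le,
      Real.rpow_natCast]
  have hz2 : (α * s) ^ 2 = α ^ 2 * ((σ ^ 2 * α) ^ 2 + r ^ 2) := by rw [mul_pow, hs2]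
  have hTw : φ u = α ^ 2 * (σ ^ 2 + u / α) / 2 := by
    simp only [hφ]; field_simp
  have hexp : Real.exp (α * (σ ^ 2 * α)) * Real.exp (-(φ u) - (α * s) ^ 2 / (4 * φ u)) =
      Real.exp (-(u ^ 2 + r ^ 2) / (2 * (σ ^ 2 + u / α))) := by
    rw [← Real.exp_add]
    congr 1
    rw [hz2, hTw]
    have hu_eq : u = α * ((σ ^ 2 + u / α) - σ ^ 2) := by field_simp; ring_nf
    set w := σ ^ 2 + u / α with hw_def
    clear_value w
    have hw0 : w ≠ 0 := hwpos.ne'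
    rw [hu_eq]
    field_simp
    ring
  unfold nigF
  rw [← hexp]
  simp only [smul_eq_mul, hrpow, abs_of_pos (by positivity : (0:ℝ) < α / 2)]
  rw [hTw]
  set w := σ ^ 2 + u / α with hw_def
  clear_value w
  have hw0 : w ≠ 0 := hwpos.ne'
  set E1 := Real.exp (α * (σ ^ 2 * α)) with hE1
  set E2 := Real.exp (-(α ^ 2 * w / 2) - (α * s) ^ 2 / (4 * (α ^ 2 * w / 2))) with hE2
  clear_value E1 E2
  field_simp
  ring

lemma nigF_nonneg (σ r α u : ℝ) : 0 ≤ nigF σ r α u := by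
  unfold nigF; positivity

lemma nigF_le (σ : ℝ) (hσ : 0 < σ) (r : ℝ) {α u : ℝ} (hα1 : 1 ≤ α) (hα2 : 2 / σ ^ 2 ≤ α)
    (hu : -(σ ^ 2 * α) < u) :
    nigF σ r α u ≤ σ ^ 2 / (2 * Real.pi) * (min (σ ^ 4 / 8) (1 / 32))⁻¹ * (1 + u ^ 2)⁻¹ := by
  have hπ := Real.pi_pos
  have hα0 : (0:ℝ) < α := lt_of_lt_of_le one_pos hα1
  have hw : 0 < σ ^ 2 + u / α := by
    have : -(σ ^ 2) < u / α := by
      rw [lt_div_iff₀ hα0]; nlinarith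
    linarith
  have hm0 : 0 < min (σ ^ 4 / 8) (1 / 32) := lt_min (by positivity) (by norm_num)
  have hkb := key_bound σ hσ hα1 hα2 hu
  have hE : 0 < Real.exp (u ^ 2 / (2 * (σ ^ 2 + u / α))) := Real.exp_pos _
  have step1 : Real.exp (-(u ^ 2 + r ^ 2) / (2 * (σ ^ 2 + u / α)))
      ≤ Real.exp (-(u ^ 2) / (2 * (σ ^ 2 + u / α))) := by
    apply Real.exp_le_exp.mpr
    rw [div_le_div_iff_of_pos_right (by linarith : (0:ℝ) < 2 * (σ ^ 2 + u / α))]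
    nlinarith [sq_nonneg r]
  have step2 : Real.exp (-(u ^ 2) / (2 * (σ ^ 2 + u / α))) / (σ ^ 2 + u / α) ^ 2
      = ((σ ^ 2 + u / α) ^ 2 * Real.exp (u ^ 2 / (2 * (σ ^ 2 + u / α))))⁻¹ := by
    rw [neg_div, Real.exp_neg]
    field_simp
  calc nigF σ r α u
      = σ ^ 2 / (2 * Real.pi) * (Real.exp (-(u ^ 2 + r ^ 2) / (2 * (σ ^ 2 + u / α)))
          / (σ ^ 2 + u / α) ^ 2) := by unfold nigF; ring
    _ ≤ σ ^ 2 / (2 * Real.pi) * (Real.exp (-(u ^ 2) / (2 * (σ ^ 2 + u / α)))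
          / (σ ^ 2 + u / α) ^ 2) := by
        apply mul_le_mul_of_nonneg_left _ (by positivity)
        rw [div_le_div_iff_of_pos_right (by positivity : (0:ℝ) < (σ ^ 2 + u / α) ^ 2)]
        exact step1
    _ = σ ^ 2 / (2 * Real.pi) *
          ((σ ^ 2 + u / α) ^ 2 * Real.exp (u ^ 2 / (2 * (σ ^ 2 + u / α))))⁻¹ := by rw [step2]
    _ ≤ σ ^ 2 / (2 * Real.pi) * (min (σ ^ 4 / 8) (1 / 32) * (1 + u ^ 2))⁻¹ := by
        apply mul_le_mul_of_nonneg_left _ (by positivity)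
        apply inv_anti₀ (by positivity) hkb
    _ = σ ^ 2 / (2 * Real.pi) * (min (σ ^ 4 / 8) (1 / 32))⁻¹ * (1 + u ^ 2)⁻¹ := by
        rw [mul_inv]; ring

lemma nigF_tendsto (σ r u : ℝ) (hσ : 0 < σ) :
    Filter.Tendsto (fun α : ℝ => nigF σ r α u) Filter.atTop
      (nhds (σ ^ 2 / (2 * Real.pi) * Real.exp (-(u ^ 2 + r ^ 2) / (2 * σ ^ 2)) / (σ ^ 2) ^ 2)) := by
  have h1 : Filter.Tendsto (fun α : ℝ => σ ^ 2 + u / α) Filter.atTop (nhds (σ ^ 2)) := by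
    have h0 : Filter.Tendsto (fun α : ℝ => u / α) Filter.atTop (nhds 0) :=
      Filter.Tendsto.div_atTop tendsto_const_nhds Filter.tendsto_id
    simpa using tendsto_const_nhds.add h0
  have h2 : ContinuousAt (fun w : ℝ =>
      σ ^ 2 / (2 * Real.pi) * Real.exp (-(u ^ 2 + r ^ 2) / (2 * w)) / w ^ 2) (σ ^ 2) := by
    apply ContinuousAt.div
    · apply ContinuousAt.mul continuousAt_const
      apply Real.continuous_exp.continuousAt.comp
      exact ContinuousAt.div continuousAt_const (by fun_prop) (by positivity)
    · fun_prop
    · positivity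
  exact h2.tendsto.comp h1

/-- Gaussian limit of the symmetric NIG density: with `δ = σ²α` held so that
`σ² = δ/α` is fixed, the density `NIG(α, 0, δ, μ)` at `t = 1` converges pointwise,
as `α → ∞`, to the normal density `N(μ, σ²)`. -/
theorem nig_gaussian_limit (σ μ x : ℝ) (hσ : 0 < σ) :
    Filter.Tendsto
      (fun α : ℝ => nigDensity α (σ ^ 2 * α) μ x 1)
      Filter.atTop
      (nhds (1 / (σ * Real.sqrt (2 * Real.pi)) * Real.exp (-(x - μ) ^ 2 / (2 * σ ^ 2)))) := by
  have hπ := Real.pi_pos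
  have key : Filter.Tendsto
      (fun α : ℝ => ∫ u, (Set.Ioi (-(σ ^ 2 * α))).indicator (nigF σ (x - μ) α) u)
      Filter.atTop
      (nhds (∫ u : ℝ,
        σ ^ 2 / (2 * Real.pi) * Real.exp (-(u ^ 2 + (x - μ) ^ 2) / (2 * σ ^ 2)) / (σ ^ 2) ^ 2)) := by
    apply MeasureTheory.tendsto_integral_filter_of_dominated_convergence
      (fun u => σ ^ 2 / (2 * Real.pi) * (min (σ ^ 4 / 8) (1 / 32))⁻¹ * (1 + u ^ 2)⁻¹)
    · filter_upwards with α
      apply Measurable.aestronglyMeasurable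
      apply Measurable.indicator _ measurableSet_Ioi
      unfold nigF
      fun_prop
    · filter_upwards [Filter.eventually_ge_atTop (1:ℝ),
        Filter.eventually_ge_atTop (2 / σ ^ 2)] with α hα1 hα2
      apply Filter.Eventually.of_forall
      intro u
      by_cases hu : u ∈ Set.Ioi (-(σ ^ 2 * α))
      · rw [Set.indicator_of_mem hu, Real.norm_eq_abs, abs_of_nonneg (nigF_nonneg σ _ α u)]
        exact nigF_le σ hσ _ hα1 hα2 hu
      · rw [Set.indicator_of_notMem hu, norm_zero]
        positivity
    · exact (integrable_inv_one_add_sq.const_mul _)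
    · apply Filter.Eventually.of_forall
      intro u
      have hev : (fun α : ℝ => nigF σ (x - μ) α u) =ᶠ[Filter.atTop]
          (fun α : ℝ => (Set.Ioi (-(σ ^ 2 * α))).indicator (nigF σ (x - μ) α) u) := by
        filter_upwards [Filter.eventually_ge_atTop ((|u| + 1) / σ ^ 2)] with α hα
        have h1 : |u| + 1 ≤ σ ^ 2 * α := by
          rw [div_le_iff₀ (by positivity : (0:ℝ) < σ ^ 2)] at hα
          nlinarith
        have hmem : u ∈ Set.Ioi (-(σ ^ 2 * α)) := by
          simp only [Set.mem_Ioi]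
          nlinarith [neg_abs_le u]
        rw [Set.indicator_of_mem hmem]
      exact Filter.Tendsto.congr' hev (nigF_tendsto σ (x - μ) u hσ)
  have hval : (∫ u : ℝ,
        σ ^ 2 / (2 * Real.pi) * Real.exp (-(u ^ 2 + (x - μ) ^ 2) / (2 * σ ^ 2)) / (σ ^ 2) ^ 2)
      = 1 / (σ * Real.sqrt (2 * Real.pi)) * Real.exp (-(x - μ) ^ 2 / (2 * σ ^ 2)) := by
    have hsplit : ∀ u : ℝ,
        σ ^ 2 / (2 * Real.pi) * Real.exp (-(u ^ 2 + (x - μ) ^ 2) / (2 * σ ^ 2)) / (σ ^ 2) ^ 2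
          = ((2 * Real.pi * σ ^ 2)⁻¹ * Real.exp (-(x - μ) ^ 2 / (2 * σ ^ 2))) *
              Real.exp (-(1 / (2 * σ ^ 2)) * u ^ 2) := by
      intro u
      rw [mul_assoc, ← Real.exp_add,
        show -(x - μ) ^ 2 / (2 * σ ^ 2) + -(1 / (2 * σ ^ 2)) * u ^ 2
          = -(u ^ 2 + (x - μ) ^ 2) / (2 * σ ^ 2) from by field_simp; ring]
      field_simp
    simp_rw [hsplit]
    rw [MeasureTheory.integral_const_mul, integral_gaussian,
      show Real.pi / (1 / (2 * σ ^ 2)) = 2 * Real.pi * σ ^ 2 from by field_simp,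
      show Real.sqrt (2 * Real.pi * σ ^ 2) = Real.sqrt (2 * Real.pi) * σ from by
        rw [Real.sqrt_mul (by positivity) (σ ^ 2), Real.sqrt_sq hσ.le]]
    set q := Real.sqrt (2 * Real.pi) with hq
    have hq2 : q ^ 2 = 2 * Real.pi := Real.sq_sqrt (by positivity)
    have hq0 : (0:ℝ) < q := Real.sqrt_pos.mpr (by positivity)
    clear_value q
    field_simp
    linear_combination hq2
  rw [← hval]
  apply Filter.Tendsto.congr' _ key
  filter_upwards [Filter.eventually_gt_atTop (0:ℝ)] with α hα
  rw [MeasureTheory.integral_indicator measurableSet_Ioi, ← nig_rewrite σ μ x hσ hα]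
end
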